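/- arXiv:2404.14008 — 2 statements merged into one kernel-verified Lean document; each statement's English description precedes it below -/
import Mathlib

section
/- For all natural numbers n and m, the alternating convolution sum Σ_{q=0}^{2m} (-1)^q C(n,q)·C(n-2,2m-q) equals (-1)^m C(n-2,m) + (-1)^{m-1} C(n-2,m-1). -/
/-- Binomial coefficient extended to integer arguments: 0 unless 0 ≤ k ≤ n. -/
def ichoose (n k : ℤ) : ℤ :=
  if 0 ≤ k ∧ k ≤ n then (n.toNat).choose k.toNat else 0

open Polynomial Finset

lemma expand_one_sub_X_pow (n : ℕ) :
    (1 - X : ℤ[X]) ^ n = ∑ i ∈ range (n + 1), C ((-1)^i * n.choose i : ℤ) * X ^ i := by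
  have : (1 - X : ℤ[X]) = -X + 1 := by ring
  rw [this, add_pow]
  apply Finset.sum_congr rfl
  intro i hi
  rw [neg_pow]
  simp only [map_mul, map_pow, map_neg, map_one, Polynomial.C_eq_natCast]
  ring

lemma coeff_one_sub_X_pow (n N : ℕ) :
    ((1 - X : ℤ[X]) ^ n).coeff N = (-1) ^ N * n.choose N := by
  rw [expand_one_sub_X_pow, finset_sum_coeff]
  simp only [coeff_C_mul, coeff_X_pow, mul_ite, mul_one, mul_zero]
  rw [Finset.sum_ite_eq (range (n+1)) N]
  split_ifs with h1
  · rfl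
  · simp at h1
    simp [Nat.choose_eq_zero_of_lt h1]

lemma expand_one_sub_X2_pow (n : ℕ) :
    (1 - X ^ 2 : ℤ[X]) ^ n = ∑ i ∈ range (n + 1), C ((-1)^i * n.choose i : ℤ) * X ^ (2 * i) := by
  have : (1 - X ^ 2 : ℤ[X]) = -(X ^ 2) + 1 := by ring
  rw [this, add_pow]
  apply Finset.sum_congr rfl
  intro i hi
  rw [neg_pow]
  simp only [map_mul, map_pow, map_neg, map_one, Polynomial.C_eq_natCast]
  rw [← pow_mul]
  ring

lemma coeff2_even (k m : ℕ) : ((1 - X ^ 2 : ℤ[X]) ^ k).coeff (2 * m) = (-1) ^ m * k.choose m := by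
  rw [expand_one_sub_X2_pow, finset_sum_coeff]
  simp only [coeff_C_mul, coeff_X_pow, mul_ite, mul_one, mul_zero]
  rw [Finset.sum_eq_single m]
  · simp
  · intro b hb hbm
    rw [if_neg (by omega)]
  · intro hm
    simp at hm
    simp [Nat.choose_eq_zero_of_lt hm]

lemma coeff2_odd (k m : ℕ) : ((1 - X ^ 2 : ℤ[X]) ^ k).coeff (2 * m + 1) = 0 := by
  rw [expand_one_sub_X2_pow, finset_sum_coeff]
  apply Finset.sum_eq_zero
  intro i hi
  simp only [coeff_C_mul, coeff_X_pow]
  rw [if_neg (by omega), mul_zero]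

lemma key (k m : ℕ) :
    ∑ q ∈ range (2*m+1), (-1:ℤ)^q * ((k+2).choose q) * (k.choose (2*m - q))
      = (-1)^m * k.choose m + (-1)^(m+1) * (if m = 0 then 0 else k.choose (m-1)) := by
  have hpoly : ((1 - X : ℤ[X]) ^ (k+2)) * (1 + X) ^ k = (1 - X ^ 2) ^ k * (1 - X) ^ 2 := by
    have h2 : ((1 - X : ℤ[X]) * (1 + X)) ^ k = (1 - X ^ 2) ^ k := by
      rw [show ((1 - X : ℤ[X]) * (1 + X)) = 1 - X ^ 2 by ring]
    calc ((1 - X : ℤ[X]) ^ (k+2)) * (1 + X) ^ k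
        = ((1 - X) * (1 + X)) ^ k * (1 - X) ^ 2 := by rw [mul_pow]; ring
      _ = (1 - X ^ 2) ^ k * (1 - X) ^ 2 := by rw [h2]
  have hLHS : (((1 - X : ℤ[X]) ^ (k+2)) * (1 + X) ^ k).coeff (2*m)
      = ∑ q ∈ range (2*m+1), (-1:ℤ)^q * ((k+2).choose q) * (k.choose (2*m - q)) := by
    rw [coeff_mul, Finset.Nat.sum_antidiagonal_eq_sum_range_succ_mk]
    apply Finset.sum_congr rfl
    intro q hq
    rw [coeff_one_sub_X_pow, coeff_one_add_X_pow, mul_assoc]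
  have hRHS : ((1 - X ^ 2 : ℤ[X]) ^ k * (1 - X) ^ 2).coeff (2*m)
      = (-1:ℤ)^m * k.choose m + (-1)^(m+1) * (if m = 0 then 0 else k.choose (m-1)) := by
    have hexp : ((1 - X ^ 2 : ℤ[X]) ^ k) * (1 - X) ^ 2
        = (1 - X^2)^k - 2 * ((1 - X^2)^k * X) + (1 - X^2)^k * X^2 := by ring
    rw [hexp]
    rcases m with _ | m'
    · simp only [coeff_add, coeff_sub, mul_zero, Nat.mul_zero]
      rw [show (2 : ℤ[X]) * ((1 - X^2)^k * X) = ((2:ℤ[X]) * (1 - X^2)^k) * X^1 by ring]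
      rw [coeff_mul_X_pow', coeff_mul_X_pow', if_neg (by omega), if_neg (by omega)]
      rw [show (0:ℕ) = 2*0 by rfl, coeff2_even k 0]
      simp
    · have hm1 : 2 * (m' + 1) - 1 = 2 * m' + 1 := by omega
      have hm2 : 2 * (m' + 1) - 2 = 2 * m' := by omega
      simp only [coeff_add, coeff_sub]
      rw [show (2 : ℤ[X]) * ((1 - X^2)^k * X) = ((2:ℤ[X]) * (1 - X^2)^k) * X^1 by ring]
      rw [coeff_mul_X_pow', coeff_mul_X_pow', if_pos (by omega), if_pos (by omega), hm1, hm2]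
      rw [Polynomial.coeff_ofNat_mul, coeff2_odd, coeff2_even, coeff2_even]
      simp only [mul_zero, sub_zero, Nat.add_sub_cancel, if_neg (Nat.succ_ne_zero m')]
      ring
  rw [← hLHS, hpoly, hRHS]

lemma ichoose_natCast (a b : ℕ) : ichoose (a : ℤ) (b : ℤ) = a.choose b := by
  unfold ichoose
  split_ifs with h
  · simp
  · push_neg at h
    have hb : (a : ℤ) < b := h (by positivity)
    have : a < b := by exact_mod_cast hb
    simp [Nat.choose_eq_zero_of_lt this]

lemma ichoose_neg (n k : ℤ) (h : n < 0) : ichoose n k = 0 := by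
  unfold ichoose
  rw [if_neg]
  rintro ⟨h1, h2⟩
  omega

theorem alternating_convolution (n m : ℕ) :
    ∑ q ∈ Finset.range (2 * m + 1),
        (-1 : ℤ) ^ q * ichoose (n : ℤ) (q : ℤ) * ichoose ((n : ℤ) - 2) (2 * (m : ℤ) - q)
      = (-1 : ℤ) ^ m * ichoose ((n : ℤ) - 2) (m : ℤ)
        + (-1 : ℤ) ^ (m + 1) * ichoose ((n : ℤ) - 2) ((m : ℤ) - 1) := by
  rcases lt_or_ge n 2 with hn | hn
  · have hneg : ((n : ℤ) - 2) < 0 := by omega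
    simp [ichoose_neg _ _ hneg]
  · obtain ⟨k, rfl⟩ : ∃ k, n = k + 2 := ⟨n - 2, by omega⟩
    have hk : ((k + 2 : ℕ) : ℤ) - 2 = (k : ℤ) := by push_cast; ring
    rw [hk]
    have hL : ∀ q ∈ Finset.range (2*m+1),
        (-1 : ℤ) ^ q * ichoose ((k+2 : ℕ) : ℤ) (q : ℤ) * ichoose (k : ℤ) (2 * (m : ℤ) - q)
          = (-1:ℤ)^q * ((k+2).choose q) * (k.choose (2*m - q)) := by
      intro q hq
      simp only [Finset.mem_range] at hq
      have h2 : 2 * (m : ℤ) - q = ((2*m - q : ℕ) : ℤ) := by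
        push_cast [Nat.cast_sub (by omega : q ≤ 2*m)]; ring
      rw [h2, ichoose_natCast, ichoose_natCast]
    rw [Finset.sum_congr rfl hL, key k m, ichoose_natCast]
    congr 1
    rcases Nat.eq_zero_or_pos m with hm | hm
    · subst hm
      simp [ichoose]
    · have h3 : (m : ℤ) - 1 = ((m - 1 : ℕ) : ℤ) := by
        push_cast [Nat.cast_sub hm]; ring
      rw [h3, ichoose_natCast, if_neg (by omega)]
end

section
/- For all natural numbers n ≥ 1 and m, the sum Σ_{q=1}^{2m+1} (-1)^q · q · C(n,q)·C(n,2m+1-q) equals -n·(-1)^m·C(n-1,m). -/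
open Polynomial Finset

lemma coeff_one_sub_X_pow_s2 (a k : ℕ) :
    ((1 - X : Polynomial ℤ) ^ a).coeff k = (-1 : ℤ) ^ k * a.choose k := by
  have h : (1 - X : Polynomial ℤ) = (-1) * (X + C (-1)) := by
    simp [mul_add]; ring
  rw [h, mul_pow, ← C_1, ← C_neg, ← C_pow, coeff_C_mul, coeff_X_add_C_pow]
  rcases le_or_gt k a with hk | hk
  · rw [← mul_assoc, ← pow_add]
    have : a + (a - k) = 2 * (a - k) + k := by omega
    rw [this, pow_add, pow_mul]
    norm_num
  · simp [Nat.choose_eq_zero_of_lt hk]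

lemma expand_coeff_even (a k : ℕ) :
    ((expand ℤ 2) ((1 - X : Polynomial ℤ) ^ a)).coeff (2 * k)
      = (-1 : ℤ) ^ k * a.choose k := by
  rw [coeff_expand (by norm_num)]
  simp [coeff_one_sub_X_pow_s2, Nat.mul_div_cancel_left]

lemma expand_coeff_odd (a j : ℕ) (hj : ¬ 2 ∣ j) :
    ((expand ℤ 2) ((1 - X : Polynomial ℤ) ^ a)).coeff j = 0 := by
  rw [coeff_expand (by norm_num), if_neg hj]

theorem alternating_derivative_convolution (n m : ℕ) (hn : 1 ≤ n) :
    ∑ q ∈ Finset.Icc 1 (2 * m + 1),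
        (-1 : ℤ) ^ q * (q : ℤ) * (n.choose q : ℤ) * (n.choose (2 * m + 1 - q) : ℤ)
      = -(n : ℤ) * (-1 : ℤ) ^ m * ((n - 1).choose m : ℤ) := by
  classical
  -- the polynomial identity
  have hmul : (1 - X : Polynomial ℤ) ^ (n - 1) * (1 + X) ^ (n - 1)
      = (1 - X ^ 2) ^ (n - 1) := by
    rw [← mul_pow]
    congr 1
    ring
  have hE : (expand ℤ 2) ((1 - X : Polynomial ℤ) ^ (n - 1))
      = (1 - X ^ 2) ^ (n - 1) := by
    rw [map_pow, map_sub, map_one, expand_X]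
  have hpoly : derivative ((1 - X : Polynomial ℤ) ^ n) * (1 + X) ^ n
      = C (-(n : ℤ)) * ((1 + X) * (expand ℤ 2) ((1 - X : Polynomial ℤ) ^ (n - 1))) := by
    have h1 : derivative ((1 - X : Polynomial ℤ) ^ n)
        = C (n : ℤ) * (1 - X) ^ (n - 1) * (-1) := by
      rw [derivative_pow]
      congr 1
      simp
    have h2 : (1 + X : Polynomial ℤ) ^ n = (1 + X) ^ (n - 1) * (1 + X) := by
      conv_lhs => rw [← Nat.sub_add_cancel hn]
      rw [pow_succ]
    rw [h1, h2, hE, C_neg]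
    linear_combination (-(C (n : ℤ)) * (1 + X)) * hmul
  have hc := congrArg (fun p : Polynomial ℤ => p.coeff (2 * m)) hpoly
  beta_reduce at hc
  -- compute the left coefficient
  rw [coeff_mul, Finset.Nat.sum_antidiagonal_eq_sum_range_succ_mk] at hc
  simp only [coeff_derivative, coeff_one_sub_X_pow_s2, coeff_one_add_X_pow] at hc
  -- compute the right coefficient
  rw [coeff_C_mul, add_mul, one_mul, coeff_add] at hc
  have hXE : (X * (expand ℤ 2) ((1 - X : Polynomial ℤ) ^ (n - 1))).coeff (2 * m) = 0 := by
    rcases Nat.eq_zero_or_pos m with hm | hm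
    · subst hm
      simp [mul_coeff_zero]
    · have h2m : 2 * m = (2 * m - 1) + 1 := by omega
      rw [h2m, coeff_X_mul, expand_coeff_odd]
      omega
  rw [hXE, add_zero, expand_coeff_even] at hc
  -- relate the stated sum to the coefficient sum
  have hsum : ∑ q ∈ Finset.Icc 1 (2 * m + 1),
        (-1 : ℤ) ^ q * (q : ℤ) * (n.choose q : ℤ) * (n.choose (2 * m + 1 - q) : ℤ)
      = ∑ k ∈ Finset.range (2 * m + 1),
        (-1 : ℤ) ^ (k + 1) * ((k : ℤ) + 1) * (n.choose (k + 1) : ℤ)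
          * (n.choose (2 * m - k) : ℤ) := by
    rw [show Finset.Icc 1 (2 * m + 1) = Finset.Ico 1 (2 * m + 2) by rfl,
      Finset.sum_Ico_eq_sum_range]
    apply Finset.sum_congr (by congr 1) (fun k hk => ?_)
    have h1 : 1 + k = k + 1 := by omega
    rw [h1]
    have h2 : 2 * m + 1 - (k + 1) = 2 * m - k := by omega
    rw [h2]
    push_cast
    ring
  rw [hsum]
  calc ∑ k ∈ Finset.range (2 * m + 1),
        (-1 : ℤ) ^ (k + 1) * ((k : ℤ) + 1) * (n.choose (k + 1) : ℤ)
          * (n.choose (2 * m - k) : ℤ)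
      = ∑ k ∈ Finset.range (2 * m).succ,
        (-1 : ℤ) ^ (k + 1) * (n.choose (k + 1) : ℤ) * ((k : ℤ) + 1)
          * (n.choose (2 * m - k) : ℤ) :=
        Finset.sum_congr rfl (fun k _ => by ring)
    _ = -(n : ℤ) * ((-1 : ℤ) ^ m * ((n - 1).choose m : ℤ)) := hc
    _ = -(n : ℤ) * (-1 : ℤ) ^ m * ((n - 1).choose m : ℤ) := by ring
end
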